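/- Let R be a discrete valuation ring with maximal ideal generated by t, and let M be a finitely generated torsion R[[X]]-module, localized appropriately so that M is a module over the localization Λ_P at P_cyc = (t, X). Suppose M is a finitely generated torsion module over Λ = R[[X]]. Then the sequence of R-modules (X^{r−1}M)/(X^r M) stabilizes up to the transition maps induced by multiplication by X, and the direct limit lim_r (X^{r−1}M)/(X^r M) is a finitely generated torsion R-module (so that a_P(M) := length_R(lim_r (X^{r−1}M)/(X^r M)) is finite). -/

import Mathlib

open Pointwise

namespace Stmt5Aux

theorem mem_psmul {Λ M : Type*} [CommRing Λ] [AddCommGroup M] [Module Λ M]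
    (a : Λ) (S : Submodule Λ M) {x : M} :
    x ∈ a • S ↔ ∃ y ∈ S, a • y = x := by
  rw [← SetLike.mem_coe, Submodule.coe_pointwise_smul]
  exact Set.mem_smul_set

theorem finite_of_X_smul_eq_zero {R : Type*} [CommRing R] {P : Type*} [AddCommGroup P]
    [Module (PowerSeries R) P] [Module R P] [IsScalarTower R (PowerSeries R) P]
    [Module.Finite (PowerSeries R) P]
    (hX : ∀ p : P, (PowerSeries.X : PowerSeries R) • p = 0) : Module.Finite R P := by
  have key : ∀ (f : PowerSeries R) (p : P), f • p = (PowerSeries.constantCoeff f) • p := by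
    intro f p
    obtain ⟨h, hh⟩ : (PowerSeries.X : PowerSeries R) ∣
        (f - PowerSeries.C (PowerSeries.constantCoeff f)) := by
      rw [PowerSeries.X_dvd_iff]; simp
    have hf : f = PowerSeries.C (PowerSeries.constantCoeff f) + PowerSeries.X * h := by
      rw [← hh]; ring
    have hC : (PowerSeries.C (PowerSeries.constantCoeff f)) • p
        = (PowerSeries.constantCoeff f) • p := by
      have : PowerSeries.C (PowerSeries.constantCoeff f)
          = algebraMap R (PowerSeries R) (PowerSeries.constantCoeff f) := by
        rw [PowerSeries.algebraMap_apply]; simp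
      rw [this, algebraMap_smul]
    calc f • p = (PowerSeries.C (PowerSeries.constantCoeff f)) • p
          + (PowerSeries.X * h) • p := by rw [← add_smul, ← hf]
      _ = (PowerSeries.constantCoeff f) • p := by
          rw [mul_smul, hX (h • p), add_zero, hC]
  obtain ⟨s, hs⟩ := Module.Finite.fg_top (R := PowerSeries R) (M := P)
  refine ⟨⟨s, ?_⟩⟩
  rw [eq_top_iff]
  rintro p -
  have hp : p ∈ Submodule.span (PowerSeries R) (↑s : Set P) := by rw [hs]; trivial
  refine Submodule.span_induction (fun x hx => Submodule.subset_span hx)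
    (Submodule.zero_mem _) (fun x y _ _ hx hy => Submodule.add_mem _ hx hy) ?_ hp
  intro a x _ hx
  rw [key a x]
  exact Submodule.smul_mem _ _ hx

theorem isArtinian_of_quotient {R : Type*} [CommRing R] {I : Ideal R}
    {P : Type*} [AddCommGroup P] [Module R P] (hM : Module.IsTorsionBySet R P I)
    (hart : @IsArtinian (R ⧸ I) P _ _ hM.module) : IsArtinian R P := by
  letI := hM.module
  let f : Submodule R P → Submodule (R ⧸ I) P := fun N =>
    { carrier := N
      add_mem' := fun hx hy => N.add_mem hx hy
      zero_mem' := N.zero_mem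
      smul_mem' := by
        rintro ⟨c⟩ x hx
        exact N.smul_mem c hx }
  have hle : ∀ {N N' : Submodule R P}, f N ≤ f N' ↔ N ≤ N' :=
    ⟨fun h x hx => h hx, fun h x hx => h hx⟩
  have hinj : Function.Injective f := by
    intro N N' h
    ext x
    exact ⟨fun hx => (hle.mp h.le) hx, fun hx => (hle.mp h.ge) hx⟩
  refine ⟨RelEmbedding.wellFounded
    (⟨⟨f, hinj⟩, ?_⟩ : ((· < ·) : Submodule R P → _ → Prop) ↪r
      ((· < ·) : Submodule (R ⧸ I) P → _ → Prop)) hart.wf⟩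
  intro N N'
  simp only [Function.Embedding.coeFn_mk, lt_iff_le_not_ge, hle]

theorem isArtinian_of_isTorsionBySet_maximal {R : Type*} [CommRing R] {I : Ideal R}
    [I.IsMaximal] {P : Type*} [AddCommGroup P] [Module R P] [Module.Finite R P]
    (h : Module.IsTorsionBySet R P I) : IsArtinian R P := by
  letI := h.module
  haveI : IsScalarTower R (R ⧸ I) P := h.isScalarTower
  haveI : Module.Finite (R ⧸ I) P := Module.Finite.of_restrictScalars_finite R (R ⧸ I) P
  letI : Field (R ⧸ I) := Ideal.Quotient.field I
  haveI : IsArtinianRing (R ⧸ I) := inferInstance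
  have hart : IsArtinian (R ⧸ I) P := isArtinian_of_fg_of_artinian'
  exact isArtinian_of_quotient h hart

theorem isArtinian_of_pow_smul {R : Type*} [CommRing R] {ϖ : R}
    (hmax : (Ideal.span {ϖ} : Ideal R).IsMaximal) :
    ∀ (k : ℕ) (P : Type*) [AddCommGroup P] [Module R P], Module.Finite R P →
      (∀ p : P, ϖ ^ k • p = 0) → IsArtinian R P := by
  intro k
  induction k with
  | zero =>
    intro P _ _ _ h
    have : Subsingleton P := ⟨fun a b => by
      have ha := h a; have hb := h b
      rw [pow_zero, one_smul] at ha hb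
      rw [ha, hb]⟩
    infer_instance
  | succ k ih =>
    intro P _ _ hfin h
    haveI := hfin
    set T : Submodule R P := ϖ • (⊤ : Submodule R P) with hT
    haveI := hmax
    haveI : IsArtinian R (P ⧸ T) := by
      haveI : Module.Finite R (P ⧸ T) :=
        Module.Finite.of_surjective T.mkQ T.mkQ_surjective
      apply isArtinian_of_isTorsionBySet_maximal (I := Ideal.span {ϖ})
      refine (Module.isTorsionBySet_span_singleton_iff ϖ).mpr ?_
      intro x
      obtain ⟨p, rfl⟩ := T.mkQ_surjective x
      rw [← map_smul, Submodule.mkQ_apply, Submodule.Quotient.mk_eq_zero]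
      exact Submodule.smul_mem_pointwise_smul p ϖ ⊤ Submodule.mem_top
    haveI : IsArtinian R T := by
      haveI : Module.Finite R T := by
        rw [Module.Finite.iff_fg]
        have : T = Submodule.map (DistribMulAction.toLinearMap R P ϖ)
            (⊤ : Submodule R P) := rfl
        rw [this]
        exact Submodule.FG.map _ Module.Finite.fg_top
      refine ih ↥T ‹Module.Finite R ↥T› ?_
      rintro ⟨x, hx⟩
      obtain ⟨p, -, hp⟩ := (mem_psmul ϖ ⊤).mp hx
      apply Subtype.ext
      show ϖ ^ k • x = 0
      rw [← hp, smul_smul, ← pow_succ]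
      exact h p
    exact isArtinian_of_range_eq_ker T.subtype T.mkQ
      (by rw [Submodule.range_subtype, Submodule.ker_mkQ])

theorem isArtinian_of_smul_eq_zero {R : Type*} [CommRing R] [IsDomain R]
    [IsDiscreteValuationRing R] {P : Type*} [AddCommGroup P] [Module R P] [Module.Finite R P]
    {c : R} (hc : c ≠ 0) (h : ∀ p : P, c • p = 0) : IsArtinian R P := by
  obtain ⟨ϖ, hϖ⟩ := IsDiscreteValuationRing.exists_irreducible R
  have hmax : (Ideal.span {ϖ} : Ideal R).IsMaximal := by
    rw [← (IsDiscreteValuationRing.irreducible_iff_uniformizer ϖ).mp hϖ]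
    exact IsLocalRing.maximalIdeal.isMaximal R
  obtain ⟨k, u, hu⟩ := IsDiscreteValuationRing.eq_unit_mul_pow_irreducible hc hϖ
  refine isArtinian_of_pow_smul hmax k P ‹_› ?_
  intro p
  have h1 : ϖ ^ k • p = ((↑u⁻¹ : R) * c) • p := by
    rw [hu, ← mul_assoc, Units.inv_mul, one_mul]
  rw [h1, mul_smul, h p, smul_zero]

end Stmt5Aux

/-- Well-definedness of Nekovář's invariant `a_P(M)`.  Let `R` be a discrete valuation ring,
`Λ = R[[X]]`, and `M` a finitely generated torsion `Λ`-module.  Write `S r = X^r M` and let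
`Q r ⊆ M/X^{r+1}M` be the image of `X^r M`, so that `Q r ≅ (X^r M)/(X^{r+1} M)`; and let
`ψ r : M/X^{r+1}M → M/X^{r+2}M` be the map induced by multiplication by `X`.  Then the system
`(X^r M)/(X^{r+1}M)` stabilizes:  for all large `r`, multiplication by `X` maps `Q r`
bijectively onto `Q (r+1)`, and `Q r` is a finitely generated torsion (equivalently, finite
length, i.e. Noetherian and Artinian) `R`-module — hence the direct limit
`lim_r (X^{r-1}M)/(X^r M)` is a finitely generated torsion `R`-module of finite length and
`a_P(M)` is well defined. -/
theorem stmt_5 {R : Type*} [CommRing R] [IsDomain R] [IsDiscreteValuationRing R]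
    {M : Type*} [AddCommGroup M] [Module (PowerSeries R) M]
    [Module R M] [IsScalarTower R (PowerSeries R) M]
    [Module.Finite (PowerSeries R) M] (htor : Module.IsTorsion (PowerSeries R) M)
    (S : ℕ → Submodule (PowerSeries R) M)
    (hS : ∀ r : ℕ, S r = (Ideal.span {(PowerSeries.X : PowerSeries R)}) ^ r •
      (⊤ : Submodule (PowerSeries R) M))
    (Q : ∀ r : ℕ, Submodule (PowerSeries R) (M ⧸ S (r + 1)))
    (hQ : ∀ r : ℕ, Q r = (S r).map (S (r + 1)).mkQ)
    (ψ : ∀ r : ℕ, (M ⧸ S (r + 1)) →ₗ[PowerSeries R] M ⧸ S (r + 2))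
    (hψ : ∀ (r : ℕ) (m : M),
      ψ r ((S (r + 1)).mkQ m) = (S (r + 2)).mkQ ((PowerSeries.X : PowerSeries R) • m)) :
    ∃ N : ℕ, ∀ r : ℕ, N ≤ r →
      Set.InjOn (ψ r) (Q r) ∧ (Q r).map (ψ r) = Q (r + 1) ∧
        Module.Finite R (Q r) ∧ IsArtinian R (Q r) := by
  classical
  -- a nonzero annihilator of M
  obtain ⟨f, hfann, hfnzd⟩ :=
    (Submodule.annihilator_top_inter_nonZeroDivisors htor)
  have hf0 : f ≠ 0 := nonZeroDivisors.ne_zero hfnzd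
  have hfm : ∀ m : M, f • m = 0 := fun m =>
    Submodule.mem_annihilator.mp hfann m Submodule.mem_top
  -- factor f = X ^ aa * g with constant coefficient of g nonzero
  obtain ⟨aa, g, hfg, hc⟩ :
      ∃ (aa : ℕ) (g : PowerSeries R), PowerSeries.X ^ aa * g = f ∧
        PowerSeries.constantCoeff g ≠ 0 := by
    exact ⟨f.order.toNat, PowerSeries.divXPowOrder f, PowerSeries.X_pow_order_mul_divXPowOrder,
      PowerSeries.constantCoeff_divXPowOrder_eq_zero_iff.not.mpr hf0⟩
  set c : R := PowerSeries.constantCoeff g with hcdef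
  -- basic facts about S
  have hS1 : ∀ r : ℕ, S (r + 1) = (PowerSeries.X : PowerSeries R) • S r := by
    intro r
    rw [hS (r + 1), hS r, pow_succ', ← Ideal.smul_eq_mul, Submodule.smul_assoc,
      Submodule.ideal_span_singleton_smul]
  have hmemX : ∀ (r : ℕ) {x : M}, x ∈ S r →
      (PowerSeries.X : PowerSeries R) • x ∈ S (r + 1) := by
    intro r x hx
    rw [hS1 r]
    exact Submodule.smul_mem_pointwise_smul _ _ _ hx
  have hmemXpow : ∀ (j r : ℕ) {x : M}, x ∈ S r →
      (PowerSeries.X ^ j : PowerSeries R) • x ∈ S (r + j) := by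
    intro j
    induction j with
    | zero => intro r x hx; simpa using hx
    | succ j ih =>
      intro r x hx
      rw [pow_succ, mul_smul]
      have h6 := ih (r + 1) (hmemX r hx)
      rwa [show r + 1 + j = r + (j + 1) by omega] at h6
  have hexists : ∀ (j r : ℕ) (x : M), x ∈ S (r + j) →
      ∃ y ∈ S r, (PowerSeries.X ^ j : PowerSeries R) • y = x := by
    intro j
    induction j with
    | zero => intro r x hx; exact ⟨x, hx, by simp⟩
    | succ j ih =>
      intro r x hx
      have hx' : x ∈ (PowerSeries.X : PowerSeries R) • S (r + j) := by
        rw [← hS1]; exact hx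
      obtain ⟨z, hz, rfl⟩ := (Stmt5Aux.mem_psmul _ _).mp hx'
      obtain ⟨y, hy, rfl⟩ := ih r z hz
      exact ⟨y, hy, by rw [← mul_smul, ← pow_succ']⟩
  have hSle : ∀ {s r : ℕ}, s ≤ r → S r ≤ S s := by
    intro s r h x hx
    obtain ⟨j, rfl⟩ := Nat.exists_eq_add_of_le h
    obtain ⟨y, hy, rfl⟩ := hexists j s x hx
    exact (S s).smul_mem _ hy
  -- X kills Q r
  have hXQ : ∀ (r : ℕ) (q : M ⧸ S (r + 1)), q ∈ Q r →
      (PowerSeries.X : PowerSeries R) • q = 0 := by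
    intro r q hq
    rw [hQ r] at hq
    obtain ⟨x, hx, rfl⟩ := hq
    rw [← map_smul, Submodule.mkQ_apply, Submodule.Quotient.mk_eq_zero]
    exact hmemX r hx
  -- c kills Q r for aa ≤ r
  have hcQ : ∀ (r : ℕ), aa ≤ r → ∀ q ∈ Q r, c • q = 0 := by
    intro r har q hq
    have hgq : g • q = 0 := by
      rw [hQ r] at hq
      obtain ⟨x, hx, rfl⟩ := hq
      have hx' : x ∈ S aa := hSle har hx
      obtain ⟨y, hy, rfl⟩ := hexists aa 0 x (by rw [Nat.zero_add]; exact hx')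
      rw [← map_smul]
      have h3 : g • ((PowerSeries.X ^ aa : PowerSeries R) • y) = f • y := by
        rw [smul_smul, mul_comm, hfg]
      rw [h3, hfm y, map_zero]
    obtain ⟨h', hh'⟩ : (PowerSeries.X : PowerSeries R) ∣ (g - PowerSeries.C c) := by
      rw [PowerSeries.X_dvd_iff]; simp [hcdef]
    have hgc : g = PowerSeries.C c + PowerSeries.X * h' := by rw [← hh']; ring
    have h2 : (PowerSeries.C c) • q = c • q := by
      have hCalg : PowerSeries.C c = algebraMap R (PowerSeries R) c := by
        rw [PowerSeries.algebraMap_apply]; simp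
      rw [hCalg, algebraMap_smul]
    calc c • q = (PowerSeries.C c) • q := h2.symm
      _ = g • q - (PowerSeries.X * h') • q := by rw [hgc, add_smul]; abel
      _ = 0 := by
          rw [hgq, mul_smul, hXQ r _ ((Q r).smul_mem h' hq), zero_sub, neg_zero]
  -- finite generation
  have hSfg : ∀ r : ℕ, (S r).FG := by
    intro r
    have hSr : S r = (PowerSeries.X ^ r : PowerSeries R) •
        (⊤ : Submodule (PowerSeries R) M) := by
      rw [hS r, Ideal.span_singleton_pow, Submodule.ideal_span_singleton_smul]
    rw [hSr]
    have : (PowerSeries.X ^ r : PowerSeries R) • (⊤ : Submodule (PowerSeries R) M)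
        = Submodule.map (DistribMulAction.toLinearMap (PowerSeries R) M
            (PowerSeries.X ^ r)) ⊤ := rfl
    rw [this]
    exact Submodule.FG.map _ Module.Finite.fg_top
  have hQfinR : ∀ r : ℕ, Module.Finite R (Q r) := by
    intro r
    haveI : Module.Finite (PowerSeries R) (Q r) := by
      rw [Module.Finite.iff_fg, hQ r]
      exact Submodule.FG.map _ (hSfg r)
    apply Stmt5Aux.finite_of_X_smul_eq_zero
    intro p
    exact Subtype.ext (hXQ r ↑p p.2)
  have hQart : ∀ r : ℕ, aa ≤ r → IsArtinian R (Q r) := by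
    intro r har
    haveI := hQfinR r
    exact Stmt5Aux.isArtinian_of_smul_eq_zero hc (fun p => Subtype.ext (hcQ r har ↑p p.2))
  -- the stabilizing chain
  let A : ℕ → Submodule (PowerSeries R) M := fun j =>
    S aa ⊓ Submodule.comap (LinearMap.lsmul (PowerSeries R) M (PowerSeries.X ^ j))
      (S (aa + j + 1))
  let B : ℕ → Submodule (PowerSeries R) (M ⧸ S (aa + 1)) := fun j =>
    (A j).map (S (aa + 1)).mkQ
  have hA : ∀ j, A j ≤ A (j + 1) := by
    rintro j m ⟨hm1, hm2⟩
    refine ⟨hm1, ?_⟩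
    have hm2' : (PowerSeries.X ^ j : PowerSeries R) • m ∈ S (aa + j + 1) := hm2
    show (PowerSeries.X ^ (j + 1) : PowerSeries R) • m ∈ S (aa + (j + 1) + 1)
    rw [pow_succ', mul_smul]
    exact hmemX _ hm2'
  have hB : ∀ j, B j ≤ B (j + 1) := fun j => Submodule.map_mono (hA j)
  have hBQ : ∀ j, B j ≤ Q aa := by
    intro j
    rw [hQ aa]
    exact Submodule.map_mono inf_le_left
  haveI := hQfinR aa
  let Cc : ℕ → Submodule R ↥(Q aa) := fun j =>
    Submodule.comap (((Q aa).subtype).restrictScalars R) ((B j).restrictScalars R)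
  have hmemC : ∀ (j : ℕ) (x : ↥(Q aa)), x ∈ Cc j ↔ (x : M ⧸ S (aa + 1)) ∈ B j :=
    fun _ _ => Iff.rfl
  have hCmono : Monotone Cc :=
    monotone_nat_of_le_succ fun j =>
      Submodule.comap_mono (fun x hx => hB j hx)
  obtain ⟨j0, hj0⟩ := monotone_stabilizes_iff_noetherian.mpr inferInstance ⟨Cc, hCmono⟩
  have hBstab : ∀ j, j0 ≤ j → ∀ q, q ∈ B (j + 1) → q ∈ B j := by
    intro j hj q hq
    have hqQ : q ∈ Q aa := hBQ (j + 1) hq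
    have h1 : (⟨q, hqQ⟩ : ↥(Q aa)) ∈ Cc (j + 1) := (hmemC _ _).mpr hq
    have h2 : (⟨q, hqQ⟩ : ↥(Q aa)) ∈ Cc j := by
      have e1 := hj0 j hj
      have e2 := hj0 (j + 1) (hj.trans (Nat.le_succ j))
      simp only [OrderHom.coe_mk] at e1 e2
      rw [← e1, e2]
      exact h1
    exact (hmemC _ _).mp h2
  -- conclusion
  refine ⟨aa + j0, ?_⟩
  intro r hr
  obtain ⟨j, rfl⟩ : ∃ j, r = aa + j := ⟨r - aa, by omega⟩
  have hjj : j0 ≤ j := by omega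
  refine ⟨?_, ?_, hQfinR _, hQart _ (by omega)⟩
  · -- injectivity
    rintro q1 hq1 q2 hq2 heq
    have hq1' : q1 ∈ Q (aa + j) := hq1
    have hq2' : q2 ∈ Q (aa + j) := hq2
    rw [hQ] at hq1' hq2'
    obtain ⟨x1, hx1, rfl⟩ := hq1'
    obtain ⟨x2, hx2, rfl⟩ := hq2'
    rw [hψ, hψ] at heq
    have hz2 : (PowerSeries.X : PowerSeries R) • (x1 - x2) ∈ S (aa + j + 2) := by
      rw [smul_sub]
      rw [Submodule.mkQ_apply, Submodule.mkQ_apply, Submodule.Quotient.eq] at heq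
      exact heq
    have hz : x1 - x2 ∈ S (aa + j) := sub_mem hx1 hx2
    obtain ⟨y, hy, hyx⟩ := hexists j aa _ hz
    have hy1 : y ∈ A (j + 1) := by
      refine ⟨hy, ?_⟩
      show (PowerSeries.X ^ (j + 1) : PowerSeries R) • y ∈ S (aa + (j + 1) + 1)
      rw [pow_succ', mul_smul, hyx]
      exact hz2
    have hy2 : (S (aa + 1)).mkQ y ∈ B j :=
      hBstab j hjj _ (Submodule.mem_map_of_mem hy1)
    obtain ⟨y', hy', hyy'⟩ := hy2
    have hsub : y - y' ∈ S (aa + 1) := by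
      rw [Submodule.mkQ_apply, Submodule.mkQ_apply, Submodule.Quotient.eq] at hyy'
      simpa [neg_sub] using (S (aa + 1)).neg_mem hyy'
    have hfinal : x1 - x2 ∈ S (aa + j + 1) := by
      have e1 : (PowerSeries.X ^ j : PowerSeries R) • y' ∈ S (aa + j + 1) := by
        exact hy'.2
      have e2 : (PowerSeries.X ^ j : PowerSeries R) • (y - y') ∈ S (aa + j + 1) := by
        have h5 := hmemXpow j (aa + 1) hsub
        rwa [show aa + 1 + j = aa + j + 1 by omega] at h5
      have e3 : x1 - x2 = (PowerSeries.X ^ j : PowerSeries R) • (y - y')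
          + (PowerSeries.X ^ j : PowerSeries R) • y' := by
        rw [← smul_add, sub_add_cancel, hyx]
      rw [e3]
      exact add_mem e2 e1
    rw [Submodule.mkQ_apply, Submodule.mkQ_apply, Submodule.Quotient.eq]
    exact hfinal
  · -- surjectivity
    apply le_antisymm
    · rintro q2 ⟨q, hq, rfl⟩
      rw [hQ] at hq
      obtain ⟨x, hx, rfl⟩ := hq
      rw [hψ, hQ]
      exact Submodule.mem_map_of_mem (hmemX _ hx)
    · intro q hq
      rw [hQ] at hq
      obtain ⟨x, hx, rfl⟩ := hq
      have hx' : x ∈ (PowerSeries.X : PowerSeries R) • S (aa + j) := by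
        rw [← hS1]; exact hx
      obtain ⟨y, hy, rfl⟩ := (Stmt5Aux.mem_psmul _ _).mp hx'
      exact ⟨(S (aa + j + 1)).mkQ y, by rw [hQ]; exact Submodule.mem_map_of_mem hy,
        hψ (aa + j) y⟩
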